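/- Under Assumptions A7 and A9, if θ̃ⁿ is a strongly consistent estimator (θ̃ⁿ → θ ℙ_θ-almost surely for every θ ∈ Θ when the data are i.i.d. with law ℙ_θ), then liminf_{n→∞} (1/n) ln ℙ_{θ₀}(θ̃ⁿ ≠ θ₀) ≥ sup_{θ₁ ∈ Θ∖{θ₀}} E_{θ₁} ln( f_Y(Y; θ₀)/f_Y(Y; θ₁) ), i.e. the rate of decay of the zero–one risk R₁(θ̃ⁿ, θ₀) is bounded below by minus the minimal Kullback–Leibler divergence min_{θ₁ ≠ θ₀} KL(ℙ_{θ₁} ‖ ℙ_{θ₀}). -/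

import Mathlib

open MeasureTheory ProbabilityTheory Filter
open scoped ENNReal NNReal

/-- The probability measure with density `f θ` with respect to `μ` (Assumption A7). -/
noncomputable def densModel {𝔜 Θ : Type*} [MeasurableSpace 𝔜]
    (μ : Measure 𝔜) (f : Θ → 𝔜 → ℝ) (θ : Θ) : Measure 𝔜 :=
  μ.withDensity fun y => ENNReal.ofReal (f θ y)

/-- The extended-real-valued expectation `E_ρ[g]`, defined as the difference of the
Lebesgue integrals of the positive and negative parts (so that e.g. `E = −∞` is
meaningful). -/
noncomputable def extExp {𝔜 : Type*} [MeasurableSpace 𝔜]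
    (ρ : Measure 𝔜) (g : 𝔜 → ℝ) : EReal :=
  ((∫⁻ y, ENNReal.ofReal (g y) ∂ρ : ℝ≥0∞) : EReal) -
    ((∫⁻ y, ENNReal.ofReal (-g y) ∂ρ : ℝ≥0∞) : EReal)

lemma my_lintegral_pi_prod {α : Type*} [MeasurableSpace α] (μ : Measure α) [SigmaFinite μ] :
    ∀ (n : ℕ) (h : Fin n → α → ℝ≥0∞), (∀ i, Measurable (h i)) →
      ∫⁻ x, ∏ i, h i (x i) ∂(Measure.pi fun _ : Fin n => μ) = ∏ i, ∫⁻ y, h i y ∂μ := by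
  intro n
  induction n with
  | zero =>
      intro h _
      simp [Measure.pi_of_empty]
  | succ n ih =>
      intro h hh
      have hmp := measurePreserving_piFinSuccAbove (fun _ : Fin (n+1) => μ) 0
      have hmeas : Measurable fun p : α × (Fin n → α) =>
          h 0 p.1 * ∏ j : Fin n, h ((0 : Fin (n+1)).succAbove j) (p.2 j) := by
        apply ((hh 0).comp measurable_fst).mul
        exact Finset.measurable_prod _ fun j _ =>
          (hh _).comp ((measurable_pi_apply j).comp measurable_snd)
      calc ∫⁻ x, ∏ i, h i (x i) ∂(Measure.pi fun _ : Fin (n+1) => μ)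
          = ∫⁻ p : α × (Fin n → α), h 0 p.1 *
              ∏ j : Fin n, h ((0 : Fin (n+1)).succAbove j) (p.2 j)
              ∂(μ.prod (Measure.pi fun _ : Fin n => μ)) := by
            rw [← hmp.lintegral_comp hmeas]
            congr 1
            ext x
            rw [Fin.prod_univ_succAbove (fun i => h i (x i)) 0]
            rfl
        _ = (∫⁻ y, h 0 y ∂μ) * ∫⁻ y : Fin n → α,
              ∏ j : Fin n, h ((0 : Fin (n+1)).succAbove j) (y j)
              ∂(Measure.pi fun _ : Fin n => μ) :=
            lintegral_prod_mul (f := h 0)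
              (g := fun y : Fin n → α => ∏ j : Fin n, h ((0 : Fin (n+1)).succAbove j) (y j))
              (hh 0).aemeasurable
              (Finset.measurable_prod _ fun j _ =>
                (hh _).comp (measurable_pi_apply j)).aemeasurable
        _ = (∫⁻ y, h 0 y ∂μ) * ∏ j : Fin n, ∫⁻ y, h ((0 : Fin (n+1)).succAbove j) y ∂μ := by
            rw [ih _ fun j => hh _]
        _ = ∏ i, ∫⁻ y, h i y ∂μ := (Fin.prod_univ_succAbove (fun i => ∫⁻ y, h i y ∂μ) 0).symm

lemma my_map_vec {𝔜 Ω : Type*} [MeasurableSpace 𝔜] [MeasurableSpace Ω]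
    (P : Measure Ω) [IsProbabilityMeasure P] (ν : Measure 𝔜) [IsProbabilityMeasure ν]
    (Y : ℕ → Ω → 𝔜) (hY : ∀ k, Measurable (Y k))
    (hlaw : ∀ k, P.map (Y k) = ν)
    (hind : iIndepFun Y P) (n : ℕ) :
    P.map (fun ω (k : Fin n) => Y k ω) = Measure.pi (fun _ : Fin n => ν) := by
  have hvec : Measurable (fun ω (k : Fin n) => Y k ω) :=
    measurable_pi_lambda _ fun k => hY k
  refine (Measure.pi_eq fun s hs => ?_).symm
  set sets : ℕ → Set 𝔜 := fun i => if h : i < n then s ⟨i, h⟩ else Set.univ with hsets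
  have hsets_meas : ∀ i ∈ Finset.range n, MeasurableSet (sets i) := by
    intro i hi
    simp only [hsets]
    rw [dif_pos (Finset.mem_range.mp hi)]
    exact hs _
  have hpre : (fun ω (k : Fin n) => Y k ω) ⁻¹' (Set.pi Set.univ s)
      = ⋂ i ∈ Finset.range n, Y i ⁻¹' sets i := by
    ext ω
    simp only [Set.mem_preimage, Set.mem_pi, Set.mem_univ, forall_true_left,
      Set.mem_iInter, Finset.mem_range, hsets]
    constructor
    · intro h i hi
      simp only [Set.mem_preimage, dif_pos hi]
      exact h ⟨i, hi⟩
    · intro h k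
      have := h k.1 k.2
      simpa only [Set.mem_preimage, dif_pos k.2, Fin.eta] using this
  rw [Measure.map_apply hvec (MeasurableSet.univ_pi hs), hpre,
    hind.measure_inter_preimage_eq_mul (Finset.range n) hsets_meas]
  rw [Finset.prod_range (fun i => P (Y i ⁻¹' sets i))]
  apply Finset.prod_congr rfl
  intro k _
  have : P (Y (k : ℕ) ⁻¹' sets (k : ℕ)) = (P.map (Y (k : ℕ))) (sets (k : ℕ)) := by
    rw [Measure.map_apply (hY _) (by
      simp only [hsets]; rw [dif_pos k.2]; exact hs _)]
  rw [this, hlaw]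
  simp only [hsets]
  rw [dif_pos k.2]

lemma my_pi_withDensity {α : Type*} [MeasurableSpace α] (μ : Measure α) [SigmaFinite μ]
    (g : α → ℝ≥0∞) (hg : Measurable g) [SigmaFinite (μ.withDensity g)] (n : ℕ) :
    Measure.pi (fun _ : Fin n => μ.withDensity g)
      = (Measure.pi fun _ : Fin n => μ).withDensity (fun x => ∏ i, g (x i)) := by
  refine Measure.pi_eq fun s hs => ?_
  rw [withDensity_apply _ (MeasurableSet.univ_pi hs),
    ← lintegral_indicator (MeasurableSet.univ_pi hs)]
  have hpoint : ∀ x : Fin n → α,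
      (Set.pi Set.univ s).indicator (fun x => ∏ i, g (x i)) x
        = ∏ i, (s i).indicator g (x i) := by
    intro x
    by_cases hx : x ∈ Set.pi Set.univ s
    · rw [Set.indicator_of_mem hx]
      exact Finset.prod_congr rfl fun i _ =>
        (Set.indicator_of_mem (hx i (Set.mem_univ i)) g).symm
    · rw [Set.indicator_of_notMem hx]
      have : ∃ i, x i ∉ s i := by
        by_contra hcon
        push_neg at hcon
        exact hx fun i _ => hcon i
      obtain ⟨i, hi⟩ := this
      exact (Finset.prod_eq_zero (Finset.mem_univ i)
        (Set.indicator_of_notMem hi g)).symm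
  calc ∫⁻ x, (Set.pi Set.univ s).indicator (fun x => ∏ i, g (x i)) x
        ∂(Measure.pi fun _ : Fin n => μ)
      = ∫⁻ x, ∏ i, (s i).indicator g (x i) ∂(Measure.pi fun _ : Fin n => μ) :=
        lintegral_congr hpoint
    _ = ∏ i : Fin n, ∫⁻ y, (s i).indicator g y ∂μ :=
        my_lintegral_pi_prod μ n _ fun i => hg.indicator (hs i)
    _ = ∏ i : Fin n, (μ.withDensity g) (s i) := by
        refine Finset.prod_congr rfl fun i _ => ?_
        rw [lintegral_indicator (hs i), withDensity_apply _ (hs i)]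

lemma my_change {α : Type*} [MeasurableSpace α] (μ : Measure α) [SigmaFinite μ]
    (f₀ f₁ : α → ℝ) (h₀ : Measurable f₀) (h₁ : Measurable f₁)
    (hp₀ : ∀ y, 0 ≤ f₀ y) (hp₁ : ∀ y, 0 < f₁ y)
    [SigmaFinite (μ.withDensity fun y => ENNReal.ofReal (f₀ y))]
    [SigmaFinite (μ.withDensity fun y => ENNReal.ofReal (f₁ y))] (n : ℕ) :
    Measure.pi (fun _ : Fin n => μ.withDensity fun y => ENNReal.ofReal (f₀ y))
      = (Measure.pi (fun _ : Fin n => μ.withDensity fun y => ENNReal.ofReal (f₁ y))).withDensity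
          (fun x => ∏ i, ENNReal.ofReal (f₀ (x i) / f₁ (x i))) := by
  have hA : Measurable fun x : Fin n → α => ∏ i : Fin n, ENNReal.ofReal (f₁ (x i)) :=
    Finset.measurable_prod _ fun i _ => (h₁.comp (measurable_pi_apply i)).ennreal_ofReal
  have hB : Measurable fun x : Fin n → α => ∏ i : Fin n, ENNReal.ofReal (f₀ (x i) / f₁ (x i)) :=
    Finset.measurable_prod _ fun i _ =>
      ((h₀.comp (measurable_pi_apply i)).div (h₁.comp (measurable_pi_apply i))).ennreal_ofReal
  rw [my_pi_withDensity μ _ h₁.ennreal_ofReal, my_pi_withDensity μ _ h₀.ennreal_ofReal,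
    ← withDensity_mul _ hA hB]
  congr 1
  ext x
  rw [Pi.mul_apply, ← Finset.prod_mul_distrib]
  refine Finset.prod_congr rfl fun i _ => ?_
  rw [← ENNReal.ofReal_mul (hp₁ (x i)).le]
  congr 1
  rw [mul_comm, div_mul_cancel₀ _ (hp₁ (x i)).ne']

/-- **Chapman–Robbins type lower bound for consistent estimators** (Proposition 6, first
part).  Under Assumptions A7 and A9, if `θ̃ⁿ` is strongly consistent (for every `θ`, when
the data are i.i.d. with law `ℙ_θ`, `θ̃ⁿ → θ` `ℙ_θ`-a.s.), then
`liminf (1/n) ln ℙ_{θ₀}(θ̃ⁿ ≠ θ₀) ≥ sup_{θ₁ ≠ θ₀} E_{θ₁} ln(f(Y;θ₀)/f(Y;θ₁))`,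
i.e. the zero–one risk decays at most at the minimal Kullback–Leibler rate. -/
theorem chapman_robbins_lower_bound_consistent
    {𝔜 Ω Θ : Type*} [MeasurableSpace 𝔜] [MeasurableSpace Ω]
    [Fintype Θ] [Nonempty Θ] [MeasurableSpace Θ] [MeasurableSingletonClass Θ]
    -- A7: dominated model with everywhere positive measurable densities
    (μ : Measure 𝔜) [SigmaFinite μ]
    (f : Θ → 𝔜 → ℝ)
    (hf_meas : ∀ θ, Measurable (f θ))
    (hf_pos : ∀ θ y, 0 < f θ y)
    (hf_prob : ∀ θ, IsProbabilityMeasure (densModel μ f θ))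
    -- the data: for each θ, (Yᵢ) are i.i.d. with law ℙ_θ under Pr θ
    (Pr : Θ → Measure Ω) (hPr : ∀ θ, IsProbabilityMeasure (Pr θ))
    (Y : ℕ → Ω → 𝔜) (hY_meas : ∀ k, Measurable (Y k))
    (hY_law : ∀ θ k, (Pr θ).map (Y k) = densModel μ f θ)
    (hY_indep : ∀ θ, iIndepFun Y (Pr θ))
    -- A9: the true value θ₀ is the unique maximizer of θ ↦ E_{θ₀} ln f(Y; θ)
    (θ₀ : Θ)
    (hA9 : ∀ θ, θ ≠ θ₀ →
      ∫ y, Real.log (f θ y) ∂(densModel μ f θ₀) <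
        ∫ y, Real.log (f θ₀ y) ∂(densModel μ f θ₀))
    -- the estimator, strongly consistent at every θ ∈ Θ
    (est : (n : ℕ) → (Fin n → 𝔜) → Θ)
    (hest_meas : ∀ n, Measurable (est n))
    (hcons : ∀ θ : Θ, ∀ᵐ ω ∂(Pr θ), ∀ᶠ n in atTop,
      est n (fun k : Fin n => Y k ω) = θ) :
    Filter.liminf
      (fun n : ℕ => (((n : ℝ)⁻¹ : ℝ) : EReal) *
        ENNReal.log (Pr θ₀ {ω | est n (fun k : Fin n => Y k ω) ≠ θ₀}))
      atTop
    ≥ ⨆ (θ₁ : Θ) (_ : θ₁ ≠ θ₀),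
        extExp (densModel μ f θ₁) (fun y => Real.log (f θ₀ y / f θ₁ y)) := by
  haveI := fun θ => hPr θ
  haveI : ∀ θ, IsProbabilityMeasure (μ.withDensity fun y => ENNReal.ofReal (f θ y)) :=
    fun θ => hf_prob θ
  rw [ge_iff_le]
  refine iSup₂_le fun θ₁ hθ₁ => ?_
  set ρ₁ : Measure 𝔜 := densModel μ f θ₁ with hρ₁
  set g : 𝔜 → ℝ := fun y => Real.log (f θ₀ y / f θ₁ y) with hg
  have hg_meas : Measurable g :=
    Real.measurable_log.comp ((hf_meas θ₀).div (hf_meas θ₁))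
  -- the positive part of g has lintegral at most 1
  have hIplus_le : (∫⁻ y, ENNReal.ofReal (g y) ∂ρ₁) ≤ 1 := by
    have h1 : (∫⁻ y, ENNReal.ofReal (g y) ∂ρ₁)
        ≤ ∫⁻ y, ENNReal.ofReal (f θ₀ y / f θ₁ y) ∂ρ₁ := by
      refine lintegral_mono fun y => ENNReal.ofReal_le_ofReal ?_
      have hpos : 0 < f θ₀ y / f θ₁ y := div_pos (hf_pos θ₀ y) (hf_pos θ₁ y)
      have := Real.log_le_sub_one_of_pos hpos
      simp only [hg]
      linarith
    have h2 : (∫⁻ y, ENNReal.ofReal (f θ₀ y / f θ₁ y) ∂ρ₁) = 1 := by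
      rw [hρ₁, densModel,
        lintegral_withDensity_eq_lintegral_mul μ (hf_meas θ₁).ennreal_ofReal
          (Measurable.ennreal_ofReal (f := fun y => f θ₀ y / f θ₁ y)
            ((hf_meas θ₀).div (hf_meas θ₁)))]
      have hpt : ∀ y, (ENNReal.ofReal (f θ₁ y) * ENNReal.ofReal (f θ₀ y / f θ₁ y))
          = ENNReal.ofReal (f θ₀ y) := by
        intro y
        rw [← ENNReal.ofReal_mul (hf_pos θ₁ y).le, mul_comm (f θ₁ y),
          div_mul_cancel₀ _ (hf_pos θ₁ y).ne']
      calc ∫⁻ y, (fun z => ENNReal.ofReal (f θ₁ z)) y * ENNReal.ofReal (f θ₀ y / f θ₁ y) ∂μ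
          = ∫⁻ y, ENNReal.ofReal (f θ₀ y) ∂μ := lintegral_congr fun y => hpt y
        _ = (densModel μ f θ₀) Set.univ := by
            rw [densModel, withDensity_apply _ MeasurableSet.univ, Measure.restrict_univ]
        _ = 1 := measure_univ
    exact h1.trans h2.le
  rcases eq_or_ne (∫⁻ y, ENNReal.ofReal (-g y) ∂ρ₁) ⊤ with hIneg | hIneg
  · -- extExp is ⊥, nothing to prove
    have : extExp ρ₁ g = ⊥ := by
      rw [extExp, hIneg, EReal.coe_ennreal_top, EReal.sub_top]
    rw [this]
    exact bot_le
  -- g is integrable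
  have hIneg_lt : (∫⁻ y, ENNReal.ofReal (-g y) ∂ρ₁) < ⊤ := lt_top_iff_ne_top.mpr hIneg
  have hint : Integrable g ρ₁ := by
    refine ⟨hg_meas.aestronglyMeasurable, ?_⟩
    rw [hasFiniteIntegral_iff_norm]
    have hpt : ∀ y, ENNReal.ofReal ‖g y‖
        = ENNReal.ofReal (g y) + ENNReal.ofReal (-g y) := by
      intro y
      rcases le_total 0 (g y) with h | h
      · rw [Real.norm_eq_abs, abs_of_nonneg h,
          ENNReal.ofReal_of_nonpos (neg_nonpos.mpr h), add_zero]
      · rw [Real.norm_eq_abs, abs_of_nonpos h, ENNReal.ofReal_of_nonpos h, zero_add]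
    calc ∫⁻ y, ENNReal.ofReal ‖g y‖ ∂ρ₁
        = ∫⁻ y, (ENNReal.ofReal (g y) + ENNReal.ofReal (-g y)) ∂ρ₁ :=
          lintegral_congr fun y => hpt y
      _ = (∫⁻ y, ENNReal.ofReal (g y) ∂ρ₁) + ∫⁻ y, ENNReal.ofReal (-g y) ∂ρ₁ :=
          lintegral_add_left hg_meas.ennreal_ofReal _
      _ < ⊤ := ENNReal.add_lt_top.mpr
          ⟨lt_of_le_of_lt hIplus_le ENNReal.one_lt_top, hIneg_lt⟩
  set c : ℝ := ∫ y, g y ∂ρ₁ with hc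
  -- the value of extExp is c
  have hext_val : extExp ρ₁ g = ((c : ℝ) : EReal) := by
    have hIplus_ne : (∫⁻ y, ENNReal.ofReal (g y) ∂ρ₁) ≠ ⊤ :=
      (lt_of_le_of_lt hIplus_le ENNReal.one_lt_top).ne
    rw [extExp, hc, integral_eq_lintegral_pos_part_sub_lintegral_neg_part hint]
    have hcoe : ∀ x : ℝ≥0∞, x ≠ ⊤ → ((x.toReal : ℝ) : EReal) = (x : EReal) := by
      intro x hx
      rw [← EReal.toReal_coe_ennreal (x := x)]
      exact EReal.coe_toReal (by simpa [EReal.coe_ennreal_eq_top_iff] using hx)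
        (EReal.coe_ennreal_ne_bot x)
    rw [EReal.coe_sub, hcoe _ hIplus_ne, hcoe _ hIneg]
  rw [hext_val]
  -- main claim: for every ε > 0, c - ε is a lower bound for the liminf
  have hclaim : ∀ ε : ℝ, 0 < ε →
      ((c - ε : ℝ) : EReal) ≤ Filter.liminf
        (fun n : ℕ => (((n : ℝ)⁻¹ : ℝ) : EReal) *
          ENNReal.log (Pr θ₀ {ω | est n (fun k : Fin n => Y k ω) ≠ θ₀})) atTop := by
    intro ε hε
    -- the i.i.d. sequence X k = g ∘ Y k under Pr θ₁
    set X : ℕ → Ω → ℝ := fun k ω => g (Y k ω) with hX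
    have hX_meas : ∀ k, Measurable (X k) := fun k => hg_meas.comp (hY_meas k)
    have hint0 : Integrable (X 0) (Pr θ₁) := by
      have h := hint
      rw [hρ₁, ← hY_law θ₁ 0] at h
      exact (integrable_map_measure hg_meas.aestronglyMeasurable
        (hY_meas 0).aemeasurable).mp h
    have hEX : ∫ ω, X 0 ω ∂(Pr θ₁) = c := by
      rw [hc, hρ₁, ← hY_law θ₁ 0,
        integral_map (hY_meas 0).aemeasurable hg_meas.aestronglyMeasurable]
    have hindep : Pairwise (Function.onFun (IndepFun · · (Pr θ₁)) X) := fun i j hij =>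
      ((hY_indep θ₁).indepFun hij).comp hg_meas hg_meas
    have hident : ∀ i, IdentDistrib (X i) (X 0) (Pr θ₁) (Pr θ₁) := by
      intro i
      refine ⟨(hX_meas i).aemeasurable, (hX_meas 0).aemeasurable, ?_⟩
      calc (Pr θ₁).map (X i) = ((Pr θ₁).map (Y i)).map g :=
            (Measure.map_map hg_meas (hY_meas i)).symm
        _ = ((Pr θ₁).map (Y 0)).map g := by rw [hY_law θ₁ i, hY_law θ₁ 0]
        _ = (Pr θ₁).map (X 0) := Measure.map_map hg_meas (hY_meas 0)
    have hslln := strong_law_ae_real X hint0 hindep hident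
    rw [hEX] at hslln
    -- the events
    set A : ℕ → Set Ω := fun n => {ω | est n (fun k : Fin n => Y k ω) ≠ θ₀} with hA
    set D : ℕ → Set Ω := fun n =>
      A n ∩ {ω | (n : ℝ) * (c - ε) ≤ ∑ i ∈ Finset.range n, X i ω} with hD
    have hvec : ∀ n : ℕ, Measurable fun ω (k : Fin n) => Y k ω := fun n =>
      measurable_pi_lambda _ fun k => hY_meas k
    have hA_meas : ∀ n, MeasurableSet (A n) := fun n =>
      ((hest_meas n).comp (hvec n)) ((measurableSet_singleton θ₀).compl)
    have hS_meas : ∀ n : ℕ, Measurable fun ω => ∑ i ∈ Finset.range n, X i ω := fun n =>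
      Finset.measurable_sum _ fun i _ => hX_meas i
    have hD_meas : ∀ n, MeasurableSet (D n) := fun n =>
      (hA_meas n).inter (measurableSet_le measurable_const (hS_meas n))
    -- almost surely, eventually in D n
    have hae : ∀ᵐ ω ∂(Pr θ₁), ∀ᶠ n in atTop, ω ∈ D n := by
      filter_upwards [hcons θ₁, hslln] with ω h1 h2
      have h3 : ∀ᶠ n : ℕ in atTop, c - ε < (∑ i ∈ Finset.range n, X i ω) / n :=
        h2.eventually_const_lt (by linarith)
      filter_upwards [h1, h3, eventually_ge_atTop 1] with n hn1 hn2 hn3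
      have hnpos : (0 : ℝ) < n := by exact_mod_cast hn3
      refine ⟨?_, ?_⟩
      · show est n (fun k : Fin n => Y k ω) ≠ θ₀
        rw [hn1]; exact hθ₁
      · show (n : ℝ) * (c - ε) ≤ ∑ i ∈ Finset.range n, X i ω
        have := (lt_div_iff₀ hnpos).mp hn2
        nlinarith
    -- the tail events E N
    set E : ℕ → Set Ω := fun N => ⋂ (n : ℕ) (_ : N ≤ n), D n with hE
    have hE_meas : ∀ N, MeasurableSet (E N) := fun N =>
      MeasurableSet.iInter fun n => MeasurableSet.iInter fun _ => hD_meas n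
    have hE_mono : Monotone E := fun N M hNM =>
      Set.iInter₂_mono' fun n hn => ⟨n, le_trans hNM hn, subset_rfl⟩
    have hEsubD : ∀ n, E n ⊆ D n := fun n ω hω => by
      exact Set.mem_iInter₂.mp hω n le_rfl
    have hEU : Pr θ₁ (⋃ N, E N) = 1 := by
      have hU_meas : MeasurableSet (⋃ N, E N) := MeasurableSet.iUnion hE_meas
      have hmem : ∀ᵐ ω ∂(Pr θ₁), ω ∈ ⋃ N, E N := by
        filter_upwards [hae] with ω hω
        obtain ⟨N, hN⟩ := eventually_atTop.mp hω
        exact Set.mem_iUnion.mpr ⟨N, Set.mem_iInter₂.mpr fun n hn => hN n hn⟩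
      have h0 : Pr θ₁ (⋃ N, E N)ᶜ = 0 := by
        rw [Set.compl_def]
        exact ae_iff.mp hmem
      have := measure_add_measure_compl (μ := Pr θ₁) hU_meas
      rw [h0, add_zero, measure_univ] at this
      exact this
    have htend : Tendsto (fun N => Pr θ₁ (E N)) atTop (nhds 1) := by
      have h := tendsto_measure_iUnion_atTop (μ := Pr θ₁) hE_mono
      rw [hEU] at h
      exact h
    have hhalf : ∀ᶠ N in atTop, (2⁻¹ : ℝ≥0∞) < Pr θ₁ (E N) :=
      htend.eventually_const_lt (by norm_num)
    -- change-of-measure inequality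
    have key : ∀ n : ℕ,
        ENNReal.ofReal (Real.exp ((n : ℝ) * (c - ε))) * Pr θ₁ (D n) ≤ Pr θ₀ (A n) := by
      intro n
      haveI : IsProbabilityMeasure (densModel μ f θ₀) := hf_prob θ₀
      haveI : IsProbabilityMeasure (densModel μ f θ₁) := hf_prob θ₁
      set B : Set (Fin n → 𝔜) := {x | est n x ≠ θ₀} with hB
      have hB_meas : MeasurableSet B := (hest_meas n) ((measurableSet_singleton θ₀).compl)
      set C : Set (Fin n → 𝔜) := {x | (n : ℝ) * (c - ε) ≤ ∑ i, g (x i)} with hC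
      have hC_meas : MeasurableSet C := measurableSet_le measurable_const
        (Finset.measurable_sum _ fun i _ => hg_meas.comp (measurable_pi_apply i))
      have hmap0 : (Pr θ₀).map (fun ω (k : Fin n) => Y k ω)
          = Measure.pi (fun _ : Fin n => densModel μ f θ₀) :=
        my_map_vec (Pr θ₀) _ Y hY_meas (fun k => hY_law θ₀ k) (hY_indep θ₀) n
      have hmap1 : (Pr θ₁).map (fun ω (k : Fin n) => Y k ω)
          = Measure.pi (fun _ : Fin n => densModel μ f θ₁) :=
        my_map_vec (Pr θ₁) _ Y hY_meas (fun k => hY_law θ₁ k) (hY_indep θ₁) n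
      have hA_eq : A n = (fun ω (k : Fin n) => Y k ω) ⁻¹' B := rfl
      have hD_eq : D n = (fun ω (k : Fin n) => Y k ω) ⁻¹' (B ∩ C) := by
        ext ω
        simp only [hD, hA, hB, hC, Set.mem_inter_iff, Set.mem_setOf_eq, Set.mem_preimage]
        refine and_congr Iff.rfl ?_
        rw [Fin.sum_univ_eq_sum_range (fun i => g (Y i ω)) n]
      have hρpi : Measure.pi (fun _ : Fin n => densModel μ f θ₀)
          = (Measure.pi (fun _ : Fin n => densModel μ f θ₁)).withDensity
              (fun x => ∏ i, ENNReal.ofReal (f θ₀ (x i) / f θ₁ (x i))) :=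
        my_change μ (f θ₀) (f θ₁) (hf_meas θ₀) (hf_meas θ₁)
          (fun y => (hf_pos θ₀ y).le) (hf_pos θ₁) n
      have hL_meas : Measurable fun x : Fin n → 𝔜 =>
          ∏ i, ENNReal.ofReal (f θ₀ (x i) / f θ₁ (x i)) :=
        Finset.measurable_prod _ fun i _ =>
          (((hf_meas θ₀).comp (measurable_pi_apply i)).div
            ((hf_meas θ₁).comp (measurable_pi_apply i))).ennreal_ofReal
      calc ENNReal.ofReal (Real.exp ((n : ℝ) * (c - ε))) * Pr θ₁ (D n)
          = ENNReal.ofReal (Real.exp ((n : ℝ) * (c - ε)))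
              * (Measure.pi (fun _ : Fin n => densModel μ f θ₁)) (B ∩ C) := by
            rw [hD_eq, ← hmap1, Measure.map_apply (hvec n) (hB_meas.inter hC_meas)]
        _ = ∫⁻ _ in B ∩ C, ENNReal.ofReal (Real.exp ((n : ℝ) * (c - ε)))
              ∂(Measure.pi (fun _ : Fin n => densModel μ f θ₁)) :=
            (setLIntegral_const _ _).symm
        _ ≤ ∫⁻ x in B ∩ C, (∏ i, ENNReal.ofReal (f θ₀ (x i) / f θ₁ (x i)))
              ∂(Measure.pi (fun _ : Fin n => densModel μ f θ₁)) := by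
            refine setLIntegral_mono hL_meas fun x hx => ?_
            have hprod : (∏ i, ENNReal.ofReal (f θ₀ (x i) / f θ₁ (x i)))
                = ENNReal.ofReal (Real.exp (∑ i, g (x i))) := by
              rw [Real.exp_sum,
                ENNReal.ofReal_prod_of_nonneg (fun i _ => (Real.exp_pos _).le)]
              refine Finset.prod_congr rfl fun i _ => ?_
              rw [Real.exp_log (div_pos (hf_pos θ₀ _) (hf_pos θ₁ _))]
            rw [hprod]
            exact ENNReal.ofReal_le_ofReal (Real.exp_le_exp.mpr hx.2)
        _ = (Measure.pi (fun _ : Fin n => densModel μ f θ₀)) (B ∩ C) := by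
            rw [hρpi, withDensity_apply _ (hB_meas.inter hC_meas)]
        _ ≤ (Measure.pi (fun _ : Fin n => densModel μ f θ₀)) B :=
            measure_mono Set.inter_subset_left
        _ = Pr θ₀ (A n) := by
            rw [← hmap0, Measure.map_apply (hvec n) hB_meas, hA_eq]
    -- the eventual pointwise lower bound
    have hfinal : ∀ᶠ n : ℕ in atTop,
        ((c - ε + Real.log 2⁻¹ / n : ℝ) : EReal)
          ≤ (((n : ℝ)⁻¹ : ℝ) : EReal) * ENNReal.log (Pr θ₀ (A n)) := by
      filter_upwards [hhalf, eventually_ge_atTop 1] with n hn2 hn1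
      have hnpos : (0 : ℝ) < n := by exact_mod_cast hn1
      have hDlow : (2⁻¹ : ℝ≥0∞) ≤ Pr θ₁ (D n) :=
        le_trans hn2.le (measure_mono (hEsubD n))
      have h2 : ENNReal.ofReal (2⁻¹ : ℝ) = (2⁻¹ : ℝ≥0∞) := by
        rw [ENNReal.ofReal_inv_of_pos (by norm_num)]
        norm_num
      have hlow : ENNReal.ofReal (Real.exp ((n : ℝ) * (c - ε)) * 2⁻¹) ≤ Pr θ₀ (A n) := by
        rw [ENNReal.ofReal_mul (Real.exp_pos _).le, h2]
        exact le_trans (mul_le_mul_right hDlow _) (key n)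
      have hne_top : Pr θ₀ (A n) ≠ ⊤ := (lt_of_le_of_lt prob_le_one ENNReal.one_lt_top).ne
      have hxpos : (0 : ℝ) < Real.exp ((n : ℝ) * (c - ε)) * 2⁻¹ := by positivity
      have htR : Real.exp ((n : ℝ) * (c - ε)) * 2⁻¹ ≤ (Pr θ₀ (A n)).toReal :=
        (ENNReal.ofReal_le_iff_le_toReal hne_top).mp hlow
      have hPpos : 0 < (Pr θ₀ (A n)).toReal := lt_of_lt_of_le hxpos htR
      have hlog : ENNReal.log (Pr θ₀ (A n))
          = ((Real.log ((Pr θ₀ (A n)).toReal) : ℝ) : EReal) :=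
        ENNReal.log_pos_real' hPpos
      rw [hlog, ← EReal.coe_mul]
      apply EReal.coe_le_coe_iff.mpr
      have hloglog : (n : ℝ) * (c - ε) + Real.log 2⁻¹
          ≤ Real.log ((Pr θ₀ (A n)).toReal) := by
        have h := (Real.log_le_log_iff hxpos hPpos).mpr htR
        rwa [Real.log_mul (Real.exp_ne_zero _) (by norm_num), Real.log_exp] at h
      have heq : c - ε + Real.log 2⁻¹ / n
          = (n : ℝ)⁻¹ * ((n : ℝ) * (c - ε) + Real.log 2⁻¹) := by
        field_simp
      rw [heq]
      exact mul_le_mul_of_nonneg_left hloglog (inv_nonneg.mpr hnpos.le)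
    -- pass to the liminf
    have hlim : Tendsto (fun n : ℕ => ((c - ε + Real.log 2⁻¹ / n : ℝ) : EReal)) atTop
        (nhds ((c - ε : ℝ) : EReal)) := by
      rw [EReal.tendsto_coe]
      have h := tendsto_const_div_atTop_nhds_zero_nat (Real.log 2⁻¹)
      have h2 := (tendsto_const_nhds (x := c - ε) (f := atTop (α := ℕ))).add h
      simpa using h2
    calc ((c - ε : ℝ) : EReal)
        = liminf (fun n : ℕ => ((c - ε + Real.log 2⁻¹ / n : ℝ) : EReal)) atTop :=
          hlim.liminf_eq.symm
      _ ≤ liminf (fun n : ℕ => (((n : ℝ)⁻¹ : ℝ) : EReal)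
            * ENNReal.log (Pr θ₀ (A n))) atTop :=
          liminf_le_liminf hfinal
  -- conclude
  by_contra hlt
  push_neg at hlt
  obtain ⟨r, hr1, hr2⟩ := EReal.exists_between_coe_real hlt
  have hrc : r < c := EReal.coe_lt_coe_iff.mp hr2
  have := hclaim (c - r) (by linarith)
  rw [show c - (c - r) = r by ring] at this
  exact absurd (lt_of_le_of_lt this hr1) (lt_irrefl _)
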